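/- Fix Θ_* ∈ ℝ^{m×q}, μ > 0, 0 < β < 2, and γ > 0. For λ ∈ [0,1] define a(γ,β,λ) = γ(2(1−γλ)(1−γβλ)² + γβ²λ), b(γ,β,λ) = γ(2β(1−γλ)(1−γβλ) − β + 2(1−β)(1−γβλ)), and c(γ,β,λ) = β(2γβ(1−γλ) + 2 − β + 4γ(1−β)). Let Θ̂, Ξ̂ ∈ ℝ^{m×q} and φ ∈ ℝ^q, set N = max{μ, ‖φ‖²}, λ = ‖φ‖²/N ∈ [0,1], ε = (Θ̂ − Θ_*)φ, and perform one high-order tuner step: Θ̄ = Θ̂ − (γβ/N) ε φ^⊤, Θ̂' = Θ̄ − β(Θ̄ − Ξ̂), Ξ̂' = Ξ̂ − (γ/N)((Θ̂' − Θ̂)φ + ε)φ^⊤. If c(γ,β,λ) > 0, then with V = ‖Ξ̂ − Θ_*‖_F² + ‖Θ̂ − Ξ̂‖_F² and V' = ‖Ξ̂' − Θ_*‖_F² + ‖Θ̂' − Ξ̂'‖_F², one has V' − V ≤ −(a(γ,β,λ) − b(γ,β,λ)²/c(γ,β,λ)) ‖ε‖²/N. -/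

import Mathlib

set_option maxHeartbeats 2000000
open scoped BigOperators

lemma sum_bilin {n : ℕ} (p v : Fin n → ℝ) (α δ α' δ' : ℝ) :
    ∑ i, (α * p i + δ * v i) * (α' * p i + δ' * v i)
      = (α*α') * (∑ i, p i^2) + (α*δ' + α'*δ) * (∑ i, p i * v i) + (δ*δ') * (∑ i, v i^2) := by
  rw [Finset.mul_sum, Finset.mul_sum, Finset.mul_sum, ← Finset.sum_add_distrib, ← Finset.sum_add_distrib]
  exact Finset.sum_congr rfl fun i _ => by ring

lemma expand_sq {m q : ℕ} (M D : Matrix (Fin m) (Fin q) ℝ) (x : Fin m → ℝ) (φ : Fin q → ℝ) (r t : ℝ)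
    (h : ∀ i j, M i j = r * D i j + t * (x i * φ j)) :
    ∑ i, ∑ j, M i j ^ 2
      = r^2 * (∑ i, ∑ j, D i j^2) + 2*r*t * (∑ i, x i * (∑ j, D i j * φ j))
        + t^2 * (∑ i, x i^2) * (∑ j, φ j^2) := by
  have hrow : ∀ i, ∑ j, M i j ^ 2
      = r^2 * (∑ j, D i j^2) + 2*r*t * (x i * (∑ j, D i j * φ j)) + t^2 * (x i^2 * (∑ j, φ j^2)) := by
    intro i
    calc ∑ j, M i j ^ 2
        = ∑ j, (r^2 * D i j^2 + (2*r*t*x i) * (D i j * φ j) + (t^2 * x i^2) * φ j^2) :=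
          Finset.sum_congr rfl fun j _ => by rw [h i j]; ring
      _ = _ := by
          rw [Finset.sum_add_distrib, Finset.sum_add_distrib, ← Finset.mul_sum, ← Finset.mul_sum,
            ← Finset.mul_sum]
          ring
  calc ∑ i, ∑ j, M i j ^ 2
      = ∑ i, (r^2 * (∑ j, D i j^2) + 2*r*t * (x i * (∑ j, D i j * φ j)) + t^2 * (x i^2 * (∑ j, φ j^2))) :=
        Finset.sum_congr rfl fun i _ => hrow i
    _ = _ := by
        rw [Finset.sum_add_distrib, Finset.sum_add_distrib, ← Finset.mul_sum, ← Finset.mul_sum,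
          ← Finset.mul_sum, ← Finset.sum_mul]
        ring

lemma quadform (A B C X Y P : ℝ) (hA : A ≤ 0) (hC : C ≤ 0) (hB : B^2 ≤ 4*(A*C))
    (hX : 0 ≤ X) (hY : 0 ≤ Y) (hP : P^2 ≤ X*Y) : A*X + B*P + C*Y ≤ 0 := by
  have h1 : (B*P)^2 ≤ (A*X + C*Y)^2 := by
    nlinarith [sq_nonneg (A*X - C*Y), sq_nonneg B, mul_nonneg hX hY, hB, hP]
  have hAX : A*X ≤ 0 := mul_nonpos_of_nonpos_of_nonneg hA hX
  have hCY : C*Y ≤ 0 := mul_nonpos_of_nonpos_of_nonneg hC hY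
  nlinarith [h1, hAX, hCY]

lemma scalar_final (γ β lam N X Pp Y SD SE kk kp : ℝ)
    (hβ0 : 0 < β) (hβ2 : β < 2) (hγ0 : 0 < γ) (hN : 0 < N)
    (hlam0 : 0 ≤ lam) (hlam1 : lam ≤ 1)
    (hXnn : 0 ≤ X) (hYnn : 0 ≤ Y) (hSDnn : 0 ≤ SD)
    (hCS : Pp^2 ≤ X*Y) (hSDY : Y ≤ SD*(lam*N))
    (hkk : kk = 1 - γ*β*lam*(1-β)) (hkp : kp = kk - β*(1-β))
    (hc : 0 < β * (2*γ*β*(1-γ*lam) + 2 - β + 4*γ*(1-β)))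
    (hzero : lam = 0 → X = 0 ∧ Pp = 0 ∧ Y = 0) :
    (1^2*SE + 2*1*(-(γ/N))*(kk*1*X + (kk*(-1) + 1*(-β))*Pp + (-β)*(-1)*Y)
       + (-(γ/N))^2*(kk*kk*X + (kk*(-β) + kk*(-β))*Pp + (-β)*(-β)*Y)*(lam*N))
    + ((1-β)^2*SD + 2*(1-β)*(γ/N)*(kp*0*X + (kp*1 + 0*(-β))*Pp + (-β)*1*Y)
       + (γ/N)^2*(kp*kp*X + (kp*(-β) + kp*(-β))*Pp + (-β)*(-β)*Y)*(lam*N))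
    - (SE + SD)
    ≤ -(γ*(2*(1-γ*lam)*(1-γ*β*lam)^2 + γ*β^2*lam)
        - (γ*(2*β*(1-γ*lam)*(1-γ*β*lam) - β + 2*(1-β)*(1-γ*β*lam)))^2
          / (β*(2*γ*β*(1-γ*lam) + 2 - β + 4*γ*(1-β)))) * (X/N) := by
  rcases hlam0.eq_or_lt with h0 | hlam0'
  · obtain ⟨hX0, hP0, hY0⟩ := hzero h0.symm
    rw [hX0, hP0, hY0, ← h0]
    have hsd : (1-β)^2*SD - SD ≤ 0 := by nlinarith [mul_nonneg hSDnn (mul_nonneg hβ0.le (by linarith : (0:ℝ) ≤ 2-β))]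
    have : (0:ℝ)/N = 0 := zero_div N
    rw [this]
    ring_nf
    nlinarith [hsd]
  · set a := γ*(2*(1-γ*lam)*(1-γ*β*lam)^2 + γ*β^2*lam) with hadef
    set b := γ*(2*β*(1-γ*lam)*(1-γ*β*lam) - β + 2*(1-β)*(1-γ*β*lam)) with hbdef
    set c := β*(2*γ*β*(1-γ*lam) + 2 - β + 4*γ*(1-β)) with hcdef
    have hK : 0 < 2 - β + 4*γ - 2*γ*β - 2*γ^2*β*lam := by
      have hc' : 0 < β * (2 - β + 4*γ - 2*γ*β - 2*γ^2*β*lam) := by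
        rw [hcdef] at hc; nlinarith [hc]
      by_contra h; push_neg at h
      nlinarith [hc', mul_nonneg hβ0.le (neg_nonneg.2 h)]
    have h2β : 0 < 2 - β := by linarith
    set cE := -2*γ*kk + γ^2*lam*(kk^2+kp^2) with hcE
    set cP := 2*γ*(β+kk) - 2*γ^2*lam*kk*β + 2*(1-β)*γ*kp - 2*γ^2*lam*kp*β with hcP
    set cV0 := -2*γ*β + 2*γ^2*lam*β^2 - 2*(1-β)*γ*β with hcV0
    set Z1 := b^2 - c*(cE+a) with hZ1def
    set Z2 := β*(2-β) - lam*cV0 with hZ2def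
    have hZ2pos : 0 < Z2 := by
      have hid2 : Z2 = β*(lam*(2 - β + 4*γ - 2*γ*β - 2*γ^2*β*lam) + (2-β)*(1-lam)) := by
        rw [hZ2def, hcV0]; ring
      rw [hid2]
      apply mul_pos hβ0
      nlinarith [mul_pos hlam0' hK, mul_nonneg h2β.le (by linarith : (0:ℝ) ≤ 1-lam)]
    have hid : 4*(Z1*Z2) - c*lam*cP^2
        = 4*γ^2*β*(2-β)*(1-lam)*(2*(γ*β*lam)^2 - 4*(γ*β*lam) + (2-β))^2 := by
      rw [hZ1def, hZ2def, hcE, hcP, hcV0, hadef, hbdef, hcdef, hkp, hkk]; ring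
    have hZ3 : c*lam*cP^2 ≤ 4*(Z1*Z2) := by
      have h4 : 0 ≤ 4*γ^2*β*(2-β)*(1-lam)*(2*(γ*β*lam)^2 - 4*(γ*β*lam) + (2-β))^2 :=
        mul_nonneg (mul_nonneg (mul_nonneg (by positivity) h2β.le)
          (by linarith : (0:ℝ) ≤ 1-lam)) (sq_nonneg _)
      linarith [hid, h4]
    have hZ1nn : 0 ≤ Z1 := by
      have h5 : 0 ≤ c*lam*cP^2 := mul_nonneg (mul_pos hc hlam0').le (sq_nonneg cP)
      nlinarith [hZ3, hZ2pos, h5]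
    have hA : -(lam*Z1) ≤ 0 := neg_nonpos.2 (mul_nonneg hlam0'.le hZ1nn)
    have hC : -(c*Z2) ≤ 0 := neg_nonpos.2 (mul_nonneg hc.le hZ2pos.le)
    have hB : (c*lam*cP)^2 ≤ 4*((-(lam*Z1))*(-(c*Z2))) := by
      have h6 : 0 ≤ (c*lam) * (4*(Z1*Z2) - c*lam*cP^2) :=
        mul_nonneg (mul_pos hc hlam0').le (by linarith [hZ3])
      have h7 : 4*((-(lam*Z1))*(-(c*Z2))) - (c*lam*cP)^2 = (c*lam) * (4*(Z1*Z2) - c*lam*cP^2) := by ring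
      linarith [h6, h7]
    have hq := quadform (-(lam*Z1)) (c*lam*cP) (-(c*Z2)) X Y Pp hA hC hB hXnn hYnn hCS
    have hclam : (0:ℝ) < c*lam := mul_pos hc hlam0'
    have hkey2 : (cE*X + cP*Pp + cV0*Y - β*(2-β)*(Y/lam)) - (-(a - b^2/c)*X)
        = ((-(lam*Z1))*X + (c*lam*cP)*Pp + (-(c*Z2))*Y)/(c*lam) := by
      rw [hZ1def, hZ2def]
      field_simp
      ring
    have hdiv : ((-(lam*Z1))*X + (c*lam*cP)*Pp + (-(c*Z2))*Y)/(c*lam) ≤ 0 :=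
      div_nonpos_of_nonpos_of_nonneg hq hclam.le
    have key : cE*X + cP*Pp + cV0*Y - β*(2-β)*(Y/lam) ≤ -(a - b^2/c)*X := by linarith [hkey2, hdiv]
    -- bridge to the big goal
    have s0 : (Y/lam)/N ≤ SD := by
      rw [div_le_iff₀ hN, div_le_iff₀ hlam0']
      have h8 : SD*N*lam = SD*(lam*N) := by ring
      linarith [hSDY, h8]
    have s1 : (cE*X + cP*Pp + cV0*Y - β*(2-β)*(Y/lam))/N ≤ (-(a - b^2/c)*X)/N :=
      (div_le_div_iff_of_pos_right hN).mpr key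
    have s2 : -(β*(2-β))*SD ≤ -(β*(2-β))*((Y/lam)/N) := by
      have hb2 : 0 ≤ β*(2-β) := mul_nonneg hβ0.le h2β.le
      linarith [mul_le_mul_of_nonneg_left s0 hb2]
    have hbig : (1^2*SE + 2*1*(-(γ/N))*(kk*1*X + (kk*(-1) + 1*(-β))*Pp + (-β)*(-1)*Y)
       + (-(γ/N))^2*(kk*kk*X + (kk*(-β) + kk*(-β))*Pp + (-β)*(-β)*Y)*(lam*N))
      + ((1-β)^2*SD + 2*(1-β)*(γ/N)*(kp*0*X + (kp*1 + 0*(-β))*Pp + (-β)*1*Y)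
       + (γ/N)^2*(kp*kp*X + (kp*(-β) + kp*(-β))*Pp + (-β)*(-β)*Y)*(lam*N))
      - (SE + SD)
        = -(β*(2-β))*SD + (cE*X + cP*Pp + cV0*Y)/N := by
      rw [hcE, hcP, hcV0]
      field_simp
      ring
    have hsplit : (cE*X + cP*Pp + cV0*Y - β*(2-β)*(Y/lam))/N
        = (cE*X + cP*Pp + cV0*Y)/N - (β*(2-β))*((Y/lam)/N) := by ring
    have hrhs : -(a - b^2/c)*(X/N) = (-(a - b^2/c)*X)/N := by ring
    rw [hbig, hrhs]
    linarith [s1, s2, hsplit]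

theorem hot_one_step_refined_decrease {m q : ℕ}
    (Θstar Θhat Ξhat : Matrix (Fin m) (Fin q) ℝ) (μ γ β : ℝ)
    (hμ : 0 < μ) (hβ0 : 0 < β) (hβ2 : β < 2) (hγ0 : 0 < γ)
    (φ : Fin q → ℝ) :
    let N := max μ (∑ j, φ j ^ 2)
    let lam := (∑ j, φ j ^ 2) / N
    let a := γ * (2 * (1 - γ * lam) * (1 - γ * β * lam) ^ 2 + γ * β ^ 2 * lam)
    let b := γ * (2 * β * (1 - γ * lam) * (1 - γ * β * lam) - β
      + 2 * (1 - β) * (1 - γ * β * lam))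
    let c := β * (2 * γ * β * (1 - γ * lam) + 2 - β + 4 * γ * (1 - β))
    let ε := (Θhat - Θstar).mulVec φ
    let Θbar := Θhat - (γ * β / N) • Matrix.vecMulVec ε φ
    let Θhat' := Θbar - β • (Θbar - Ξhat)
    let Ξhat' := Ξhat - (γ / N) • Matrix.vecMulVec ((Θhat' - Θhat).mulVec φ + ε) φ
    0 < c →
      ((∑ i, ∑ j, (Ξhat' - Θstar) i j ^ 2) + ∑ i, ∑ j, (Θhat' - Ξhat') i j ^ 2)
          - ((∑ i, ∑ j, (Ξhat - Θstar) i j ^ 2) + ∑ i, ∑ j, (Θhat - Ξhat) i j ^ 2)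
        ≤ -(a - b ^ 2 / c) * ((∑ i, ε i ^ 2) / N) := by
  intro N lam a b c ε Θbar Θhat' Ξhat' hc
  have hN : 0 < N := lt_of_lt_of_le hμ (le_max_left _ _)
  have hNne : N ≠ 0 := ne_of_gt hN
  have hS0 : 0 ≤ ∑ j, φ j ^ 2 := Finset.sum_nonneg fun j _ => sq_nonneg _
  have hSN : (∑ j, φ j ^ 2) = lam * N := (div_mul_cancel₀ _ hNne).symm
  have hlam1 : lam ≤ 1 := by
    rw [show lam = (∑ j, φ j ^ 2) / N from rfl, div_le_one hN]; exact le_max_right _ _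
  have hlam0 : 0 ≤ lam := div_nonneg hS0 (le_of_lt hN)
  set v : Fin m → ℝ := fun i => ∑ j, (Θhat - Ξhat) i j * φ j with hv
  have hεdef : ∀ i, ε i = ∑ j, (Θhat - Θstar) i j * φ j := fun i => rfl
  have hεuv : ∀ i, ε i = (∑ j, (Ξhat - Θstar) i j * φ j) + v i := by
    intro i
    rw [hεdef i, show v i = ∑ j, (Θhat - Ξhat) i j * φ j from rfl, ← Finset.sum_add_distrib]
    exact Finset.sum_congr rfl fun j _ => by simp only [Matrix.sub_apply]; ring
  set kk := 1 - γ*β*lam*(1-β) with hkk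
  set kp := kk - β*(1-β) with hkp
  have hw : ∀ i, ((Θhat' - Θhat).mulVec φ + ε) i = kk * ε i + (-β) * v i := by
    intro i
    have hent : ∀ j, (Θhat' - Θhat) i j
        = (-β) * ((Θhat - Ξhat) i j) + (-((1-β)*(γ*β/N))) * (ε i * φ j) := by
      intro j
      show (Θbar i j - β * (Θbar i j - Ξhat i j)) - Θhat i j = _
      show ((Θhat i j - (γ*β/N) * (ε i * φ j)) - β * ((Θhat i j - (γ*β/N) * (ε i * φ j)) - Ξhat i j))
          - Θhat i j = _
      simp only [Matrix.sub_apply]; ring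
    calc ((Θhat' - Θhat).mulVec φ + ε) i
        = (∑ j, (Θhat' - Θhat) i j * φ j) + ε i := rfl
      _ = (∑ j, ((-β) * ((Θhat - Ξhat) i j * φ j) + ((-((1-β)*(γ*β/N))) * ε i) * φ j^2)) + ε i := by
          refine congrArg (· + ε i) (Finset.sum_congr rfl fun j _ => ?_)
          rw [hent j]; ring
      _ = ((-β) * (∑ j, (Θhat - Ξhat) i j * φ j) + ((-((1-β)*(γ*β/N))) * ε i) * (∑ j, φ j^2)) + ε i := by
          rw [Finset.sum_add_distrib, ← Finset.mul_sum, ← Finset.mul_sum]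
      _ = kk * ε i + (-β) * v i := by
          rw [hSN, show (∑ j, (Θhat - Ξhat) i j * φ j) = v i from rfl, hkk]
          field_simp; ring
  have hXient : ∀ i j, (Ξhat' - Θstar) i j
      = 1 * ((Ξhat - Θstar) i j) + (-(γ/N)) * ((kk * ε i + (-β) * v i) * φ j) := by
    intro i j
    have h0 : (Ξhat' - Θstar) i j
        = (Ξhat i j - (γ/N) * (((Θhat' - Θhat).mulVec φ + ε) i * φ j)) - Θstar i j := rfl
    rw [h0, hw i]; simp only [Matrix.sub_apply]; ring
  have hDent : ∀ i j, (Θhat' - Ξhat') i j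
      = (1-β) * ((Θhat - Ξhat) i j) + (γ/N) * ((kp * ε i + (-β) * v i) * φ j) := by
    intro i j
    have h0 : (Θhat' - Ξhat') i j
        = ((Θhat i j - (γ*β/N) * (ε i * φ j)) - β * ((Θhat i j - (γ*β/N) * (ε i * φ j)) - Ξhat i j))
          - (Ξhat i j - (γ/N) * (((Θhat' - Θhat).mulVec φ + ε) i * φ j)) := rfl
    rw [h0, hw i, hkp]; simp only [Matrix.sub_apply]; ring
  set X := ∑ i, ε i^2 with hXdef
  set Pp := ∑ i, ε i * v i with hPdef
  set Y := ∑ i, v i^2 with hYdef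
  set SE := ∑ i, ∑ j, (Ξhat - Θstar) i j^2 with hSEdef
  set SD := ∑ i, ∑ j, (Θhat - Ξhat) i j^2 with hSDdef
  set x1 : Fin m → ℝ := fun i => kk * ε i + (-β) * v i with hx1
  set x2 : Fin m → ℝ := fun i => kp * ε i + (-β) * v i with hx2
  have T1 := expand_sq (Ξhat' - Θstar) (Ξhat - Θstar) x1 φ 1 (-(γ/N)) hXient
  have T2 := expand_sq (Θhat' - Ξhat') (Θhat - Ξhat) x2 φ (1-β) (γ/N) hDent
  have hu : ∀ i, (∑ j, (Ξhat - Θstar) i j * φ j) = 1 * ε i + (-1) * v i := by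
    intro i; have := hεuv i; linarith
  have hvv : ∀ i, (∑ j, (Θhat - Ξhat) i j * φ j) = 0 * ε i + 1 * v i := by
    intro i; show v i = _; ring
  have hmid1 : (∑ i, x1 i * (∑ j, (Ξhat - Θstar) i j * φ j))
      = (kk*1)*X + (kk*(-1) + 1*(-β))*Pp + ((-β)*(-1))*Y := by
    calc (∑ i, x1 i * (∑ j, (Ξhat - Θstar) i j * φ j))
        = ∑ i, (kk * ε i + (-β) * v i) * (1 * ε i + (-1) * v i) :=
          Finset.sum_congr rfl fun i _ => by rw [hu i]
      _ = _ := sum_bilin ε v kk (-β) 1 (-1)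
  have hmid2 : (∑ i, x2 i * (∑ j, (Θhat - Ξhat) i j * φ j))
      = (kp*0)*X + (kp*1 + 0*(-β))*Pp + ((-β)*1)*Y := by
    calc (∑ i, x2 i * (∑ j, (Θhat - Ξhat) i j * φ j))
        = ∑ i, (kp * ε i + (-β) * v i) * (0 * ε i + 1 * v i) :=
          Finset.sum_congr rfl fun i _ => by rw [hvv i]
      _ = _ := sum_bilin ε v kp (-β) 0 1
  have hsq1 : (∑ i, x1 i ^2) = (kk*kk)*X + (kk*(-β) + kk*(-β))*Pp + ((-β)*(-β))*Y := by
    calc (∑ i, x1 i ^2) = ∑ i, (kk * ε i + (-β) * v i) * (kk * ε i + (-β) * v i) :=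
          Finset.sum_congr rfl fun i _ => by rw [sq]
      _ = _ := sum_bilin ε v kk (-β) kk (-β)
  have hsq2 : (∑ i, x2 i ^2) = (kp*kp)*X + (kp*(-β) + kp*(-β))*Pp + ((-β)*(-β))*Y := by
    calc (∑ i, x2 i ^2) = ∑ i, (kp * ε i + (-β) * v i) * (kp * ε i + (-β) * v i) :=
          Finset.sum_congr rfl fun i _ => by rw [sq]
      _ = _ := sum_bilin ε v kp (-β) kp (-β)
  rw [hmid1, hsq1, hSN] at T1
  rw [hmid2, hsq2, hSN] at T2
  rw [T1, T2]
  have ha : a = γ * (2 * (1 - γ * lam) * (1 - γ * β * lam) ^ 2 + γ * β ^ 2 * lam) := rfl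
  have hb : b = γ * (2 * β * (1 - γ * lam) * (1 - γ * β * lam) - β
      + 2 * (1 - β) * (1 - γ * β * lam)) := rfl
  have hcc : c = β * (2 * γ * β * (1 - γ * lam) + 2 - β + 4 * γ * (1 - β)) := rfl
  rw [ha, hb, hcc]; rw [hcc] at hc
  have hXnn : 0 ≤ X := Finset.sum_nonneg fun i _ => sq_nonneg _
  have hYnn : 0 ≤ Y := Finset.sum_nonneg fun i _ => sq_nonneg _
  have hSDnn : 0 ≤ SD := Finset.sum_nonneg fun i _ => Finset.sum_nonneg fun j _ => sq_nonneg _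
  have hCS : Pp^2 ≤ X*Y := Finset.sum_mul_sq_le_sq_mul_sq _ _ _
  have hSDY : Y ≤ SD * (lam*N) := by
    rw [← hSN, hYdef, hSDdef, Finset.sum_mul]
    refine Finset.sum_le_sum fun i _ => ?_
    exact Finset.sum_mul_sq_le_sq_mul_sq _ _ _
  have hzero : lam = 0 → X = 0 ∧ Pp = 0 ∧ Y = 0 := by
    intro hl0
    have hs0 : (∑ j, φ j ^ 2) = 0 := by rw [hSN, hl0, zero_mul]
    have hφ : ∀ j, φ j = 0 := by
      intro j
      have h := (Finset.sum_eq_zero_iff_of_nonneg (fun j _ => sq_nonneg (φ j))).mp hs0 j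
        (Finset.mem_univ j)
      exact (pow_eq_zero_iff two_ne_zero).mp h
    have hv0 : ∀ i, v i = 0 := fun i => by
      show (∑ j, (Θhat - Ξhat) i j * φ j) = 0
      exact Finset.sum_eq_zero fun j _ => by rw [hφ j, mul_zero]
    have hε0 : ∀ i, ε i = 0 := fun i => by
      rw [hεdef i]; exact Finset.sum_eq_zero fun j _ => by rw [hφ j, mul_zero]
    refine ⟨?_, ?_, ?_⟩
    · rw [hXdef]; exact Finset.sum_eq_zero fun i _ => by rw [hε0 i]; ring
    · rw [hPdef]; exact Finset.sum_eq_zero fun i _ => by rw [hε0 i, zero_mul]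
    · rw [hYdef]; exact Finset.sum_eq_zero fun i _ => by rw [hv0 i]; ring
  rw [← hSEdef, ← hSDdef]
  linarith [scalar_final γ β lam N X Pp Y SD SE kk kp hβ0 hβ2 hγ0 hN hlam0 hlam1
    hXnn hYnn hSDnn hCS hSDY hkk hkp hc hzero]
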